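/- Let (X,d) be a metric space, P a finite nonempty subset of X, and ε > 0. Let C' ⊆ C be finite nonempty subsets of X, let q' ∈ C', and let q'' ∈ X satisfy max_{p∈P} d(p, C') ≤ (1 + ε/5)·d(C', q''). Suppose there exist o ∈ X and ρ ≥ 0 with d(q', o) ≤ ρ and d(q'', o) ≤ ρ. Then max_{p∈P} d(p, C) ≤ (2 + 2ε/5)·ρ. -/
import Mathlib


/-- Case 2 of the proof of Theorem 4 (two greedy centers in a common
optimal ball bound the covering radius). -/
theorem stmt_9 {X : Type*} [MetricSpace X] (P : Finset X) (hP : P.Nonempty)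
    (ε : ℝ) (hε : 0 < ε)
    (C' C : Finset X) (hC' : C'.Nonempty) (hsub : C' ⊆ C)
    (q' : X) (hq' : q' ∈ C') (q'' : X)
    (hfar : ∀ p ∈ P, Metric.infDist p (C' : Set X) ≤
      (1 + ε / 5) * Metric.infDist q'' (C' : Set X))
    (o : X) (ρ : ℝ) (hρ : 0 ≤ ρ) (h1 : dist q' o ≤ ρ) (h2 : dist q'' o ≤ ρ) :
    ∀ p ∈ P, Metric.infDist p (C : Set X) ≤ (2 + 2 * ε / 5) * ρ := by
  intro p hp
  have hq''C' : Metric.infDist q'' (C' : Set X) ≤ 2 * ρ := by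
    calc Metric.infDist q'' (C' : Set X) ≤ dist q'' q' :=
          Metric.infDist_le_dist_of_mem (by exact_mod_cast hq')
      _ ≤ dist q'' o + dist o q' := dist_triangle _ _ _
      _ ≤ ρ + ρ := by rw [dist_comm o q']; linarith
      _ = 2 * ρ := by ring
  have hmono : Metric.infDist p (C : Set X) ≤ Metric.infDist p (C' : Set X) :=
    Metric.infDist_le_infDist_of_subset (by exact_mod_cast hsub) (by exact hC'.to_set)
  have := hfar p hp
  nlinarith [Metric.infDist_nonneg (x := q'') (s := (C' : Set X))]
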